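/- arXiv:1512.02783 — 2 statements merged into one kernel-verified Lean document; each statement's English description precedes it below -/
import Mathlib

section
/- For any α ∈ (n/(n+2), 1) there exists a finite constant C > 0 depending only on n and α such that for every absolutely continuous probability measure μ on ℝⁿ with finite second moment and every R ≥ 0, ∫_{ℝⁿ∖B_R} μ(x)^α dx ≤ (1 + M(μ))^α · C · (1/(R²+1))^{α − (n/2)(1−α)}. -/
open MeasureTheory ENNReal Filter Topology
noncomputable section

abbrev En (n : ℕ) : Type := EuclideanSpace ℝ (Fin n)

def M2 {n : ℕ} (μ : Measure (En n)) : ℝ≥0∞ := ∫⁻ x, (‖x‖₊ : ℝ≥0∞) ^ 2 ∂μ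

/-- The key constant: integral of `(1+‖x‖²)^(-β)` over `ℝⁿ`. -/
def Cb (n : ℕ) (β : ℝ) : ℝ≥0∞ :=
  ∫⁻ x : En n, ENNReal.ofReal ((1 + ‖x‖ ^ 2) ^ (-β))

/-- If `b/2 ≤ a` (and everything positive), then `a^(-β) ≤ 2^β * b^(-β)`. -/
lemma half_rpow_le {a b β : ℝ} (ha : 0 < a) (hb : 0 < b) (hβ : 0 ≤ β)
    (h : b / 2 ≤ a) : a ^ (-β) ≤ 2 ^ β * b ^ (-β) := by
  have h1 : a ^ (-β) ≤ (b / 2) ^ (-β) :=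
    Real.rpow_le_rpow_of_nonpos (by positivity) h (by linarith)
  calc a ^ (-β) ≤ (b / 2) ^ (-β) := h1
    _ = b ^ (-β) / 2 ^ (-β) := Real.div_rpow hb.le (by norm_num) _
    _ = 2 ^ β * b ^ (-β) := by
        rw [Real.rpow_neg (by norm_num : (0:ℝ) ≤ 2)]
        field_simp

lemma Cb_lt_top {n : ℕ} {β : ℝ} (hβ : (n : ℝ) / 2 < β) : Cb n β < ∞ := by
  have hβ0 : 0 < β := lt_of_le_of_lt (by positivity) hβ
  have hnr : (Module.finrank ℝ (En n) : ℝ) < 2 * β := by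
    rw [finrank_euclideanSpace_fin]; linarith
  have hfin := finite_integral_one_add_norm (E := En n) (μ := volume) hnr
  have hmono : Cb n β ≤
      ∫⁻ x : En n, ENNReal.ofReal ((2:ℝ) ^ β * (1 + ‖x‖) ^ (-(2 * β))) := by
    refine lintegral_mono fun x => ENNReal.ofReal_le_ofReal ?_
    have h2 : (0:ℝ) < 1 + ‖x‖ := by positivity
    have key : (1 + ‖x‖) ^ 2 / 2 ≤ 1 + ‖x‖ ^ 2 := by
      nlinarith [sq_nonneg (1 - ‖x‖), norm_nonneg x]
    have := half_rpow_le (by positivity : (0:ℝ) < 1 + ‖x‖ ^ 2)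
      (by positivity : (0:ℝ) < (1 + ‖x‖) ^ 2) hβ0.le key
    refine this.trans_eq ?_
    congr 1
    rw [← Real.rpow_natCast (1 + ‖x‖) 2, ← Real.rpow_mul h2.le]
    norm_num
  refine lt_of_le_of_lt hmono ?_
  calc (∫⁻ x : En n, ENNReal.ofReal ((2:ℝ) ^ β * (1 + ‖x‖) ^ (-(2 * β))))
      = ∫⁻ x : En n, ENNReal.ofReal ((2:ℝ) ^ β) *
          ENNReal.ofReal ((1 + ‖x‖) ^ (-(2 * β))) := by
        simp_rw [ENNReal.ofReal_mul (by positivity : (0:ℝ) ≤ (2:ℝ) ^ β)]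
    _ = ENNReal.ofReal ((2:ℝ) ^ β) *
          ∫⁻ x : En n, ENNReal.ofReal ((1 + ‖x‖) ^ (-(2 * β))) :=
        lintegral_const_mul' _ _ ENNReal.ofReal_ne_top
    _ < ∞ := ENNReal.mul_lt_top ENNReal.ofReal_lt_top hfin

lemma scaling_eq {n : ℕ} {β : ℝ} {s : ℝ} (hs : 0 < s) :
    ∫⁻ x : En n, ENNReal.ofReal ((s + ‖x‖ ^ 2) ^ (-β)) =
      ENNReal.ofReal (s ^ ((n : ℝ) / 2 - β)) * Cb n β := by
  set c := Real.sqrt s with hcdef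
  have hc0 : 0 < c := Real.sqrt_pos.2 hs
  have hmap := Measure.map_addHaar_smul (μ := (volume : Measure (En n))) hc0.ne'
  have hmeas : Measurable fun y : En n => ENNReal.ofReal ((s + ‖y‖ ^ 2) ^ (-β)) :=
    Measurable.ennreal_ofReal (((measurable_norm.pow_const 2).const_add s).pow_const (-β))
  have hvol : (volume : Measure (En n)) =
      ENNReal.ofReal (c ^ n) • Measure.map (c • ·) (volume : Measure (En n)) := by
    rw [hmap, smul_smul, finrank_euclideanSpace_fin, abs_of_nonneg (by positivity),
      ← ENNReal.ofReal_mul (by positivity), mul_inv_cancel₀ (by positivity),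
      ENNReal.ofReal_one, one_smul]
  have hpt : ∀ x : En n, ENNReal.ofReal ((s + ‖c • x‖ ^ 2) ^ (-β)) =
      ENNReal.ofReal (s ^ (-β)) * ENNReal.ofReal ((1 + ‖x‖ ^ 2) ^ (-β)) := by
    intro x
    have h1 : ‖c • x‖ ^ 2 = s * ‖x‖ ^ 2 := by
      rw [norm_smul, Real.norm_eq_abs, abs_of_nonneg hc0.le, mul_pow, Real.sq_sqrt hs.le]
    rw [h1, ← ENNReal.ofReal_mul (by positivity), ← Real.mul_rpow hs.le (by positivity)]
    ring_nf
  calc (∫⁻ x : En n, ENNReal.ofReal ((s + ‖x‖ ^ 2) ^ (-β)))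
      = ∫⁻ x, ENNReal.ofReal ((s + ‖x‖ ^ 2) ^ (-β))
          ∂(ENNReal.ofReal (c ^ n) • Measure.map (c • ·) (volume : Measure (En n))) := by
        rw [← hvol]
    _ = ENNReal.ofReal (c ^ n) *
          ∫⁻ x, ENNReal.ofReal ((s + ‖x‖ ^ 2) ^ (-β))
            ∂(Measure.map (c • ·) (volume : Measure (En n))) := lintegral_smul_measure _ _
    _ = ENNReal.ofReal (c ^ n) *
          ∫⁻ x : En n, ENNReal.ofReal ((s + ‖c • x‖ ^ 2) ^ (-β)) := by
        rw [lintegral_map hmeas (measurable_const_smul c)]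
    _ = ENNReal.ofReal (c ^ n) *
          (ENNReal.ofReal (s ^ (-β)) * Cb n β) := by
        simp_rw [hpt]; rw [lintegral_const_mul' _ _ ENNReal.ofReal_ne_top]; rfl
    _ = ENNReal.ofReal (s ^ ((n : ℝ) / 2 - β)) * Cb n β := by
        rw [← mul_assoc, ← ENNReal.ofReal_mul (by positivity)]
        congr 2
        have : c ^ n = s ^ ((n : ℝ) / 2) := by
          rw [hcdef, Real.sqrt_eq_rpow, ← Real.rpow_natCast (s ^ ((1:ℝ)/2)) n,
            ← Real.rpow_mul hs.le]
          ring_nf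
        rw [this, ← Real.rpow_add hs]
        ring_nf

lemma tail_bound {n : ℕ} {β : ℝ} (hβ : 0 ≤ β) {R : ℝ} (hR : 0 ≤ R) :
    ∫⁻ x in (Metric.ball (0 : En n) R)ᶜ,
        ENNReal.ofReal ((1 + ‖x‖ ^ 2) ^ (-β)) ∂volume ≤
      ENNReal.ofReal ((2:ℝ) ^ β) * ENNReal.ofReal ((1 + R ^ 2) ^ ((n : ℝ) / 2 - β)) *
        Cb n β := by
  have hs : (0:ℝ) < 1 + R ^ 2 := by positivity
  have hpt : ∀ x ∈ (Metric.ball (0 : En n) R)ᶜ,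
      ENNReal.ofReal ((1 + ‖x‖ ^ 2) ^ (-β)) ≤
        ENNReal.ofReal ((2:ℝ) ^ β) *
          ENNReal.ofReal (((1 + R ^ 2) + ‖x‖ ^ 2) ^ (-β)) := by
    intro x hx
    have hxR : R ≤ ‖x‖ := by
      have := hx
      simp only [Set.mem_compl_iff, Metric.mem_ball, dist_zero_right, not_lt] at this
      exact this
    have hR2 : R ^ 2 ≤ ‖x‖ ^ 2 := by nlinarith [norm_nonneg x]
    have hdiv : ((1 + R ^ 2) + ‖x‖ ^ 2) / 2 ≤ 1 + ‖x‖ ^ 2 := by nlinarith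
    rw [← ENNReal.ofReal_mul (by positivity)]
    exact ENNReal.ofReal_le_ofReal
      (half_rpow_le (by positivity) (by positivity) hβ hdiv)
  calc (∫⁻ x in (Metric.ball (0 : En n) R)ᶜ,
          ENNReal.ofReal ((1 + ‖x‖ ^ 2) ^ (-β)) ∂volume)
      ≤ ∫⁻ x in (Metric.ball (0 : En n) R)ᶜ,
          ENNReal.ofReal ((2:ℝ) ^ β) *
            ENNReal.ofReal (((1 + R ^ 2) + ‖x‖ ^ 2) ^ (-β)) ∂volume :=
        setLIntegral_mono' (Metric.isOpen_ball.isClosed_compl.measurableSet) hpt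
    _ ≤ ∫⁻ x : En n, ENNReal.ofReal ((2:ℝ) ^ β) *
            ENNReal.ofReal (((1 + R ^ 2) + ‖x‖ ^ 2) ^ (-β)) ∂volume :=
        setLIntegral_le_lintegral _ _
    _ = ENNReal.ofReal ((2:ℝ) ^ β) *
          ∫⁻ x : En n, ENNReal.ofReal (((1 + R ^ 2) + ‖x‖ ^ 2) ^ (-β)) ∂volume :=
        lintegral_const_mul' _ _ ENNReal.ofReal_ne_top
    _ = ENNReal.ofReal ((2:ℝ) ^ β) *
          (ENNReal.ofReal ((1 + R ^ 2) ^ ((n : ℝ) / 2 - β)) * Cb n β) := by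
        rw [scaling_eq hs]
    _ = ENNReal.ofReal ((2:ℝ) ^ β) * ENNReal.ofReal ((1 + R ^ 2) ^ ((n : ℝ) / 2 - β)) *
          Cb n β := by ring

/-- for `α ∈ (n/(n+2), 1)` there is a finite `C > 0` (depending only on `n, α`)
such that for every absolutely continuous probability measure `μ` on `ℝⁿ` with finite
second moment and every `R ≥ 0`,
`∫_{ℝⁿ∖B_R} μ(x)^α dx ≤ (1 + M(μ))^α ⬝ C ⬝ (1/(R²+1))^{α − (n/2)(1−α)}`. -/
theorem stmt_2 {n : ℕ} (α : ℝ) (hα₁ : (n : ℝ) / (n + 2) < α) (hα₂ : α < 1) :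
    ∃ C : ℝ≥0∞, 0 < C ∧ C ≠ ∞ ∧
      ∀ (μ : Measure (En n)) [IsProbabilityMeasure μ], μ ≪ volume → M2 μ ≠ ∞ →
        ∀ R : ℝ, 0 ≤ R →
          ∫⁻ x in (Metric.ball (0 : En n) R)ᶜ, (μ.rnDeriv volume x) ^ α ∂volume ≤
            (1 + M2 μ) ^ α * C *
              (ENNReal.ofReal (1 / (R ^ 2 + 1))) ^ (α - (n / 2 : ℝ) * (1 - α)) := by
  have hα0 : 0 < α := lt_of_le_of_lt (by positivity) hα₁
  have h1α : 0 < 1 - α := by linarith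
  set β : ℝ := α / (1 - α) with hβdef
  have hβpos : 0 < β := div_pos hα0 h1α
  have hβ : (n : ℝ) / 2 < β := by
    rw [hβdef, div_lt_div_iff₀ two_pos h1α]
    rw [div_lt_iff₀ (by positivity : (0:ℝ) < (n:ℝ) + 2)] at hα₁
    nlinarith
  have hCb := Cb_lt_top (n := n) hβ
  refine ⟨(ENNReal.ofReal ((2:ℝ) ^ β) * (Cb n β + 1)) ^ (1 - α), ?_, ?_, ?_⟩
  · apply ENNReal.rpow_pos
    · exact ENNReal.mul_pos (by simp [ENNReal.ofReal_pos]; positivity) (by simp)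
    · exact ENNReal.mul_ne_top ENNReal.ofReal_ne_top (by simp [hCb.ne])
  · exact ENNReal.rpow_ne_top_of_nonneg h1α.le
      (ENNReal.mul_ne_top ENNReal.ofReal_ne_top (by simp [hCb.ne]))
  intro μ _ hac hM2 R hR
  set S := (Metric.ball (0 : En n) R)ᶜ with hSdef
  set f := μ.rnDeriv volume with hfdef
  have hf_meas : Measurable f := Measure.measurable_rnDeriv _ _
  have ht_pos : ∀ x : En n, (0:ℝ) < 1 + ‖x‖ ^ 2 := fun x => by positivity
  set φ : En n → ℝ≥0∞ := fun x => (f x * ENNReal.ofReal (1 + ‖x‖ ^ 2)) ^ α with hφdef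
  set ψ : En n → ℝ≥0∞ := fun x => ENNReal.ofReal ((1 + ‖x‖ ^ 2) ^ (-α)) with hψdef
  have hφ_meas : Measurable φ :=
    (hf_meas.mul (Measurable.ennreal_ofReal
      ((measurable_norm.pow_const 2).const_add 1))).pow_const α
  have hψ_meas : Measurable ψ :=
    Measurable.ennreal_ofReal (((measurable_norm.pow_const 2).const_add 1).pow_const (-α))
  have hpq : Real.HolderConjugate (1 / α) (1 / (1 - α)) := by
    rw [Real.holderConjugate_iff]
    constructor
    · rw [lt_div_iff₀ hα0]; linarith
    · rw [one_div, one_div, inv_inv, inv_inv]; ring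
  -- pointwise: φ * ψ = f ^ α
  have hprod : ∀ x : En n, (φ * ψ) x = f x ^ α := by
    intro x
    have ht := ht_pos x
    have hne0 : ENNReal.ofReal (1 + ‖x‖ ^ 2) ≠ 0 := by
      simp [ENNReal.ofReal_pos.2 ht, ne_of_gt, (ENNReal.ofReal_pos.2 ht).ne']
    show (f x * ENNReal.ofReal (1 + ‖x‖ ^ 2)) ^ α *
        ENNReal.ofReal ((1 + ‖x‖ ^ 2) ^ (-α)) = f x ^ α
    rw [ENNReal.mul_rpow_of_nonneg _ _ hα0.le, ← ENNReal.ofReal_rpow_of_pos ht,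
      mul_assoc, ← ENNReal.rpow_add _ _ hne0 ENNReal.ofReal_ne_top]
    simp
  -- Hölder
  have holder := ENNReal.lintegral_mul_le_Lp_mul_Lq (volume.restrict S) hpq
    hφ_meas.aemeasurable hψ_meas.aemeasurable
  -- first factor
  have hA : (∫⁻ x in S, φ x ^ (1 / α) ∂volume) ≤ 1 + M2 μ := by
    have hpt : ∀ x : En n, φ x ^ (1 / α) = f x * ENNReal.ofReal (1 + ‖x‖ ^ 2) := by
      intro x
      rw [hφdef, ← ENNReal.rpow_mul, mul_one_div, div_self hα0.ne', ENNReal.rpow_one]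
    calc (∫⁻ x in S, φ x ^ (1 / α) ∂volume)
        = ∫⁻ x in S, f x * ENNReal.ofReal (1 + ‖x‖ ^ 2) ∂volume := by
          simp_rw [hpt]
      _ ≤ ∫⁻ x, f x * ENNReal.ofReal (1 + ‖x‖ ^ 2) ∂volume :=
          setLIntegral_le_lintegral _ _
      _ = ∫⁻ x, ENNReal.ofReal (1 + ‖x‖ ^ 2) ∂μ :=
          MeasureTheory.lintegral_rnDeriv_mul hac
            (Measurable.ennreal_ofReal ((measurable_norm.pow_const 2).const_add 1)).aemeasurable
      _ = ∫⁻ x, (1 + (‖x‖₊ : ℝ≥0∞) ^ 2) ∂μ := by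
          refine lintegral_congr fun x => ?_
          rw [ENNReal.ofReal_add zero_le_one (by positivity), ENNReal.ofReal_one,
            ENNReal.ofReal_pow (norm_nonneg x), ofReal_norm, enorm_eq_nnnorm]
      _ = 1 + M2 μ := by
          rw [lintegral_add_left measurable_const, lintegral_one, measure_univ, M2]
  -- second factor
  have hB : (∫⁻ x in S, ψ x ^ (1 / (1 - α)) ∂volume) ≤
      ENNReal.ofReal ((2:ℝ) ^ β) * (Cb n β + 1) *
        ENNReal.ofReal ((1 + R ^ 2) ^ ((n : ℝ) / 2 - β)) := by
    have hpt : ∀ x : En n, ψ x ^ (1 / (1 - α)) =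
        ENNReal.ofReal ((1 + ‖x‖ ^ 2) ^ (-β)) := by
      intro x
      rw [hψdef]
      rw [ENNReal.ofReal_rpow_of_pos (by positivity), ← Real.rpow_mul (ht_pos x).le]
      congr 2
      rw [hβdef]; field_simp
    calc (∫⁻ x in S, ψ x ^ (1 / (1 - α)) ∂volume)
        = ∫⁻ x in S, ENNReal.ofReal ((1 + ‖x‖ ^ 2) ^ (-β)) ∂volume := by
          simp_rw [hpt]
      _ ≤ ENNReal.ofReal ((2:ℝ) ^ β) * ENNReal.ofReal ((1 + R ^ 2) ^ ((n : ℝ) / 2 - β)) *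
            Cb n β := tail_bound hβpos.le hR
      _ ≤ ENNReal.ofReal ((2:ℝ) ^ β) *
            ENNReal.ofReal ((1 + R ^ 2) ^ ((n : ℝ) / 2 - β)) * (Cb n β + 1) :=
          mul_le_mul' le_rfl le_self_add
      _ = ENNReal.ofReal ((2:ℝ) ^ β) * (Cb n β + 1) *
            ENNReal.ofReal ((1 + R ^ 2) ^ ((n : ℝ) / 2 - β)) := by ring
  -- put it together
  have key : (∫⁻ x in S, f x ^ α ∂volume) ≤
      (1 + M2 μ) ^ α *
        ((ENNReal.ofReal ((2:ℝ) ^ β) * (Cb n β + 1)) ^ (1 - α) *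
          (ENNReal.ofReal ((1 + R ^ 2) ^ ((n : ℝ) / 2 - β))) ^ (1 - α)) := by
    calc (∫⁻ x in S, f x ^ α ∂volume)
        = ∫⁻ x in S, (φ * ψ) x ∂volume := by
          refine lintegral_congr fun x => (hprod x).symm
      _ ≤ (∫⁻ x in S, φ x ^ (1 / α) ∂volume) ^ (1 / (1 / α)) *
            (∫⁻ x in S, ψ x ^ (1 / (1 - α)) ∂volume) ^ (1 / (1 / (1 - α))) := holder
      _ = (∫⁻ x in S, φ x ^ (1 / α) ∂volume) ^ α *
            (∫⁻ x in S, ψ x ^ (1 / (1 - α)) ∂volume) ^ (1 - α) := by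
          rw [one_div_one_div, one_div_one_div]
      _ ≤ (1 + M2 μ) ^ α *
            (ENNReal.ofReal ((2:ℝ) ^ β) * (Cb n β + 1) *
              ENNReal.ofReal ((1 + R ^ 2) ^ ((n : ℝ) / 2 - β))) ^ (1 - α) :=
          mul_le_mul' (ENNReal.rpow_le_rpow hA hα0.le)
            (ENNReal.rpow_le_rpow hB h1α.le)
      _ = (1 + M2 μ) ^ α *
            ((ENNReal.ofReal ((2:ℝ) ^ β) * (Cb n β + 1)) ^ (1 - α) *
              (ENNReal.ofReal ((1 + R ^ 2) ^ ((n : ℝ) / 2 - β))) ^ (1 - α)) := by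
          rw [ENNReal.mul_rpow_of_nonneg _ _ h1α.le]
  refine key.trans_eq ?_
  rw [mul_assoc]
  congr 2
  -- identify the R-dependent factor
  have hs : (0:ℝ) < R ^ 2 + 1 := by positivity
  have hexp : ((n : ℝ) / 2 - β) * (1 - α) = -(α - (n / 2 : ℝ) * (1 - α)) := by
    have : β * (1 - α) = α := by rw [hβdef]; field_simp
    nlinarith [this]
  rw [ENNReal.ofReal_rpow_of_pos (by positivity), ← Real.rpow_mul (by positivity), hexp]
  rw [show (1:ℝ) + R ^ 2 = R ^ 2 + 1 by ring]
  rw [ENNReal.ofReal_rpow_of_pos (by positivity), one_div,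
    ← Real.rpow_neg_one (R ^ 2 + 1), ← Real.rpow_mul hs.le]
  ring_nf
end
end

section
/- Let γ ∈ Π(μ,ν) be a coupling of probability measures μ, ν on ℝⁿ, and let γ_ℓ be its block approximation at scale ℓ > 0, i.e., γ_ℓ = Σ_{(j,k)∈(ℤⁿ)²} γ(Q_j^ℓ × Q_k^ℓ) (μ_j^ℓ ⊗ ν_k^ℓ). Then γ_ℓ is also a coupling of μ and ν: γ_ℓ ∈ Π(μ,ν). -/
open MeasureTheory ENNReal Filter Topology
noncomputable section

def IsCoupling {n : ℕ} (μ ν : Measure (En n)) (γ : Measure (En n × En n)) : Prop :=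
  γ.map Prod.fst = μ ∧ γ.map Prod.snd = ν

def tCost {n : ℕ} (γ : Measure (En n × En n)) : ℝ≥0∞ :=
  ∫⁻ p, (‖p.1 - p.2‖₊ : ℝ≥0∞) ^ 2 ∂γ

def W2sq {n : ℕ} (μ ν : Measure (En n)) : ℝ≥0∞ :=
  ⨅ (γ : Measure (En n × En n)) (_ : IsCoupling μ ν γ), tCost γ

def dens {X : Type*} [MeasureSpace X] (μ : Measure X) (x : X) : ℝ :=
  (μ.rnDeriv volume x).toReal

def entIntegrand {X : Type*} [MeasureSpace X] (μ : Measure X) (x : X) : ℝ :=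
  dens μ x * Real.log (dens μ x)

def Hneg {X : Type*} [MeasureSpace X] (μ : Measure X) : ℝ≥0∞ :=
  ∫⁻ x, ENNReal.ofReal (-(entIntegrand μ x))

def Hpos {X : Type*} [MeasureSpace X] (μ : Measure X) : ℝ≥0∞ :=
  ∫⁻ x, ENNReal.ofReal (entIntegrand μ x)

open scoped Classical in
def entE {X : Type*} [MeasureSpace X] (μ : Measure X) : EReal :=
  if μ ≪ (volume : Measure X) then
    (if Hpos μ = ∞ then (⊤ : EReal) else ((Hpos μ).toReal : EReal) - ((Hneg μ : ℝ≥0∞) : EReal))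
  else ⊤

def W2epsE {n : ℕ} (ε : ℝ) (μ ν : Measure (En n)) : EReal :=
  ⨅ (γ : Measure (En n × En n)) (_ : IsCoupling μ ν γ),
    ((tCost γ : ℝ≥0∞) : EReal) + (ε : EReal) * entE γ

def cube {n : ℕ} (j : Fin n → ℤ) (ℓ : ℝ) : Set (En n) :=
  {x | ∀ i, (j i : ℝ) * ℓ ≤ x i ∧ x i < ((j i : ℝ) + 1) * ℓ}

def cellNormalize {n : ℕ} (μ : Measure (En n)) (S : Set (En n)) : Measure (En n) :=
  (μ S)⁻¹ • μ.restrict S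

def blockApprox {n : ℕ} (μ ν : Measure (En n)) (γ : Measure (En n × En n)) (ℓ : ℝ) :
    Measure (En n × En n) :=
  Measure.sum (fun jk : (Fin n → ℤ) × (Fin n → ℤ) =>
    γ (cube jk.1 ℓ ×ˢ cube jk.2 ℓ) •
      ((cellNormalize μ (cube jk.1 ℓ)).prod (cellNormalize ν (cube jk.2 ℓ))))

open Set in
lemma mem_cube_iff_floor {n : ℕ} {j : Fin n → ℤ} {ℓ : ℝ} (hℓ : 0 < ℓ)
    {x : En n} : x ∈ cube j ℓ ↔ ∀ i, ⌊x i / ℓ⌋ = j i := by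
  unfold cube
  simp only [Set.mem_setOf_eq]
  refine forall_congr' fun i => ?_
  rw [Int.floor_eq_iff]
  constructor
  · rintro ⟨h1, h2⟩
    exact ⟨(le_div_iff₀ hℓ).2 h1, (div_lt_iff₀ hℓ).2 (by linarith [h2])⟩
  · rintro ⟨h1, h2⟩
    refine ⟨(le_div_iff₀ hℓ).1 h1, ?_⟩
    have := (div_lt_iff₀ hℓ).1 h2
    linarith

open Set in
lemma measurableSet_cube {n : ℕ} (j : Fin n → ℤ) (ℓ : ℝ) : MeasurableSet (cube j ℓ) := by
  have : cube j ℓ = ⋂ i, {x : En n |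
      (j i : ℝ) * ℓ ≤ x i ∧ x i < ((j i : ℝ) + 1) * ℓ} := by
    ext x; simp [cube]
  rw [this]
  refine MeasurableSet.iInter fun i => ?_
  have hm : Measurable fun x : En n => x i := (EuclideanSpace.proj (𝕜 := ℝ) i).continuous.measurable
  exact (measurableSet_le measurable_const hm).inter (measurableSet_lt hm measurable_const)

open Set in
lemma pairwise_disjoint_cube {n : ℕ} {ℓ : ℝ} (hℓ : 0 < ℓ) :
    Pairwise (Function.onFun Disjoint (fun j : Fin n → ℤ => cube j ℓ)) := by
  intro j j' hjj'
  refine Set.disjoint_left.2 fun x hx hx' => hjj' ?_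
  funext i
  rw [← (mem_cube_iff_floor hℓ).1 hx i, (mem_cube_iff_floor hℓ).1 hx' i]

open Set in
lemma iUnion_cube {n : ℕ} {ℓ : ℝ} (hℓ : 0 < ℓ) :
    ⋃ j : Fin n → ℤ, cube j ℓ = Set.univ := by
  refine Set.eq_univ_of_forall fun x => Set.mem_iUnion.2 ⟨fun i => ⌊x i / ℓ⌋, ?_⟩
  exact (mem_cube_iff_floor hℓ).2 fun i => rfl

open Set in
/-- the block approximation at scale `ℓ > 0` of a coupling `γ ∈ Π(μ,ν)` of
probability measures `μ, ν` on `ℝⁿ` is again a coupling of `μ` and `ν`. -/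
theorem stmt_7 {n : ℕ} (μ ν : Measure (En n))
    [IsProbabilityMeasure μ] [IsProbabilityMeasure ν]
    (γ : Measure (En n × En n)) (hγ : IsCoupling μ ν γ)
    (ℓ : ℝ) (hℓ : 0 < ℓ) :
    IsCoupling μ ν (blockApprox μ ν γ ℓ) := by
  obtain ⟨hfst, hsnd⟩ := hγ
  have hQ : ∀ j : Fin n → ℤ, MeasurableSet (cube j ℓ) := fun j => measurableSet_cube j ℓ
  haveI : ∀ j : Fin n → ℤ, SFinite (cellNormalize μ (cube j ℓ)) := by
    intro j; unfold cellNormalize; infer_instance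
  haveI : ∀ j : Fin n → ℤ, SFinite (cellNormalize ν (cube j ℓ)) := by
    intro j; unfold cellNormalize; infer_instance
  -- marginal identification
  have hγfst : ∀ j, γ (cube j ℓ ×ˢ univ) = μ (cube j ℓ) := by
    intro j
    rw [Set.prod_univ, ← Measure.map_apply measurable_fst (hQ j), hfst]
  have hγsnd : ∀ k, γ (univ ×ˢ cube k ℓ) = ν (cube k ℓ) := by
    intro k
    rw [Set.univ_prod, ← Measure.map_apply measurable_snd (hQ k), hsnd]
  -- normalize total mass
  have cellν_univ : ∀ k, ν (cube k ℓ) ≠ 0 → cellNormalize ν (cube k ℓ) univ = 1 := by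
    intro k h0
    rw [cellNormalize, Measure.smul_apply, smul_eq_mul, Measure.restrict_apply_univ,
      ENNReal.inv_mul_cancel h0 (measure_ne_top ν _)]
  have cellμ_univ : ∀ j, μ (cube j ℓ) ≠ 0 → cellNormalize μ (cube j ℓ) univ = 1 := by
    intro j h0
    rw [cellNormalize, Measure.smul_apply, smul_eq_mul, Measure.restrict_apply_univ,
      ENNReal.inv_mul_cancel h0 (measure_ne_top μ _)]
  constructor
  · ext s hs
    rw [Measure.map_apply measurable_fst hs, blockApprox,
      Measure.sum_apply _ (measurable_fst hs), ← Set.prod_univ]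
    have step1 : ∀ jk : (Fin n → ℤ) × (Fin n → ℤ),
        (γ (cube jk.1 ℓ ×ˢ cube jk.2 ℓ) •
          ((cellNormalize μ (cube jk.1 ℓ)).prod (cellNormalize ν (cube jk.2 ℓ)))) (s ×ˢ univ)
        = γ (cube jk.1 ℓ ×ˢ cube jk.2 ℓ) * cellNormalize μ (cube jk.1 ℓ) s := by
      rintro ⟨j, k⟩
      rw [Measure.smul_apply, smul_eq_mul, Measure.prod_prod]
      by_cases h0 : ν (cube k ℓ) = 0
      · have hz : γ (cube j ℓ ×ˢ cube k ℓ) = 0 :=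
          measure_mono_null (fun p hp => Set.mem_prod.2 ⟨Set.mem_univ _, hp.2⟩)
            ((hγsnd k).trans h0)
        simp [hz]
      · rw [cellν_univ k h0, mul_one]
    rw [tsum_congr step1, ENNReal.tsum_prod']
    have step2 : ∀ j : Fin n → ℤ,
        (∑' k : Fin n → ℤ, γ (cube j ℓ ×ˢ cube k ℓ) * cellNormalize μ (cube j ℓ) s)
        = μ (s ∩ cube j ℓ) := by
      intro j
      rw [ENNReal.tsum_mul_right]
      have hdisj : Pairwise (Function.onFun Disjoint
          (fun k : Fin n → ℤ => cube j ℓ ×ˢ cube k ℓ)) := by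
        intro k k' hkk'
        exact Set.disjoint_left.2 fun p hp hp' =>
          Set.disjoint_left.1 (pairwise_disjoint_cube hℓ hkk') hp.2 hp'.2
      have hsum : (∑' k : Fin n → ℤ, γ (cube j ℓ ×ˢ cube k ℓ)) = μ (cube j ℓ) := by
        rw [← measure_iUnion hdisj (fun k => (hQ j).prod (hQ k)), ← Set.prod_iUnion,
          iUnion_cube hℓ, hγfst j]
      rw [hsum]
      by_cases h0 : μ (cube j ℓ) = 0
      · rw [h0, zero_mul, eq_comm]
        exact measure_mono_null Set.inter_subset_right h0
      · rw [cellNormalize, Measure.smul_apply, smul_eq_mul, Measure.restrict_apply hs,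
          ← mul_assoc, ENNReal.mul_inv_cancel h0 (measure_ne_top μ _), one_mul]
    rw [tsum_congr step2, ← measure_iUnion
      (fun j j' hjj' => ((pairwise_disjoint_cube hℓ hjj').mono
        Set.inter_subset_right Set.inter_subset_right))
      (fun j => hs.inter (hQ j)), ← Set.inter_iUnion, iUnion_cube hℓ, Set.inter_univ]
  · ext s hs
    rw [Measure.map_apply measurable_snd hs, blockApprox,
      Measure.sum_apply _ (measurable_snd hs), ← Set.univ_prod]
    have step1 : ∀ jk : (Fin n → ℤ) × (Fin n → ℤ),
        (γ (cube jk.1 ℓ ×ˢ cube jk.2 ℓ) •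
          ((cellNormalize μ (cube jk.1 ℓ)).prod (cellNormalize ν (cube jk.2 ℓ)))) (univ ×ˢ s)
        = γ (cube jk.1 ℓ ×ˢ cube jk.2 ℓ) * cellNormalize ν (cube jk.2 ℓ) s := by
      rintro ⟨j, k⟩
      rw [Measure.smul_apply, smul_eq_mul, Measure.prod_prod]
      by_cases h0 : μ (cube j ℓ) = 0
      · have hz : γ (cube j ℓ ×ˢ cube k ℓ) = 0 :=
          measure_mono_null (fun p hp => Set.mem_prod.2 ⟨hp.1, Set.mem_univ _⟩)
            ((hγfst j).trans h0)
        simp [hz]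
      · rw [cellμ_univ j h0, one_mul]
    rw [tsum_congr step1, ENNReal.tsum_prod', ENNReal.tsum_comm]
    have step2 : ∀ k : Fin n → ℤ,
        (∑' j : Fin n → ℤ, γ (cube j ℓ ×ˢ cube k ℓ) * cellNormalize ν (cube k ℓ) s)
        = ν (s ∩ cube k ℓ) := by
      intro k
      rw [ENNReal.tsum_mul_right]
      have hdisj : Pairwise (Function.onFun Disjoint
          (fun j : Fin n → ℤ => cube j ℓ ×ˢ cube k ℓ)) := by
        intro j j' hjj'
        exact Set.disjoint_left.2 fun p hp hp' =>
          Set.disjoint_left.1 (pairwise_disjoint_cube hℓ hjj') hp.1 hp'.1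
      have hsum : (∑' j : Fin n → ℤ, γ (cube j ℓ ×ˢ cube k ℓ)) = ν (cube k ℓ) := by
        rw [← measure_iUnion hdisj (fun j => (hQ j).prod (hQ k)), ← Set.iUnion_prod_const,
          iUnion_cube hℓ, hγsnd k]
      rw [hsum]
      by_cases h0 : ν (cube k ℓ) = 0
      · rw [h0, zero_mul, eq_comm]
        exact measure_mono_null Set.inter_subset_right h0
      · rw [cellNormalize, Measure.smul_apply, smul_eq_mul, Measure.restrict_apply hs,
          ← mul_assoc, ENNReal.mul_inv_cancel h0 (measure_ne_top ν _), one_mul]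
    rw [tsum_congr step2, ← measure_iUnion
      (fun j j' hjj' => ((pairwise_disjoint_cube hℓ hjj').mono
        Set.inter_subset_right Set.inter_subset_right))
      (fun k => hs.inter (hQ k)), ← Set.inter_iUnion, iUnion_cube hℓ, Set.inter_univ]
end
end
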